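/- Let G be a simple graph with a proper edge coloring α, let u be a vertex, and let X_u(α,v) = (ux_0,...,ux_p) be an α-fan at u that forms a path in the fan digraph D_u(α) (i.e., the color m_α(x_p) is missing at u). Then the colorings α and X_u^{-1}(α,v) are Kempe-equivalent, where X_u^{-1}(α,v) recolors each edge ux_i with m_α(x_i). -/
import Mathlib


open SimpleGraph

/-- A proper edge coloring: edges of `G` sharing a vertex get different colors. -/
def IsProperEdgeColoring {V : Type*} (G : SimpleGraph V) {t : ℕ} (c : Sym2 V → Fin t) : Prop :=
  ∀ e₁ ∈ G.edgeSet, ∀ e₂ ∈ G.edgeSet, e₁ ≠ e₂ → (∃ v, v ∈ e₁ ∧ v ∈ e₂) → c e₁ ≠ c e₂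

/-- The chromatic index: least number of colors in a proper edge coloring. -/
noncomputable def chromaticIndex {V : Type*} (G : SimpleGraph V) : ℕ :=
  sInf {t | ∃ c : Sym2 V → Fin t, IsProperEdgeColoring G c}

/-- Color `c` is missing at vertex `w` under coloring `α`. -/
def MissingAt {V : Type*} (G : SimpleGraph V) {t : ℕ} (α : Sym2 V → Fin t) (c : Fin t)
    (w : V) : Prop :=
  ∀ e ∈ G.edgeSet, w ∈ e → α e ≠ c

/-- The subgraph `K_α(a,b)` induced by the edges colored `a` or `b`. -/
def bicolored {V : Type*} (G : SimpleGraph V) {t : ℕ} (α : Sym2 V → Fin t) (a b : Fin t) :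
    SimpleGraph V :=
  SimpleGraph.fromEdgeSet {e | e ∈ G.edgeSet ∧ (α e = a ∨ α e = b)}

/-- `β` is obtained from `α` by a single Kempe change: swapping two colors `a`, `b` on a
connected component of the bicolored subgraph `K_α(a,b)`. -/
def IsKempeSwap {V : Type*} (G : SimpleGraph V) {t : ℕ} (α β : Sym2 V → Fin t) : Prop :=
  ∃ a b : Fin t, ∃ C : (bicolored G α a b).ConnectedComponent,
    (∀ e ∈ G.edgeSet, (α e = a ∨ α e = b) →
      (∀ v ∈ e, (bicolored G α a b).connectedComponentMk v = C) →
      ((α e = a ∧ β e = b) ∨ (α e = b ∧ β e = a))) ∧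
    (∀ e : Sym2 V, (e ∉ G.edgeSet ∨ (α e ≠ a ∧ α e ≠ b) ∨
        ∃ v ∈ e, (bicolored G α a b).connectedComponentMk v ≠ C) → β e = α e)

/-- Kempe equivalence: reachability by a sequence of Kempe changes. -/
def KempeEquiv {V : Type*} (G : SimpleGraph V) {t : ℕ} (α β : Sym2 V → Fin t) : Prop :=
  Relation.ReflTransGen (IsKempeSwap G) α β

/-- `G` is chordless: in every cycle, any two nonconsecutive vertices are nonadjacent. -/
def Chordless {V : Type*} (G : SimpleGraph V) : Prop :=
  ∀ n : ℕ, 3 ≤ n → ∀ c : ZMod n → V, Function.Injective c →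
    (∀ i, G.Adj (c i) (c (i + 1))) →
    ∀ i j : ZMod n, j ≠ i → j ≠ i + 1 → i ≠ j + 1 → ¬ G.Adj (c i) (c j)

/-- An `α`-fan at `u`: edges `u x₀, …, u xₚ` with `m i` a color missing at `x i`
and `α (u x_{i+1}) = m i`. -/
structure IsFan {V : Type*} (G : SimpleGraph V) {t : ℕ} (α : Sym2 V → Fin t)
    (u : V) (p : ℕ) (x : ℕ → V) (m : ℕ → Fin t) : Prop where
  adj : ∀ i ≤ p, G.Adj u (x i)
  inj : ∀ i ≤ p, ∀ j ≤ p, x i = x j → i = j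
  missing : ∀ i ≤ p, MissingAt G α (m i) (x i)
  succ : ∀ i < p, α s(u, x (i + 1)) = m i

/-- The coloring `X_u^{-1}(α,v)`: each fan edge `u xᵢ` is recolored with `m i`,
all other edges keep their color. -/
def IsFanRecolor {V : Type*} {t : ℕ} (α : Sym2 V → Fin t)
    (u : V) (p : ℕ) (x : ℕ → V) (m : ℕ → Fin t) (β : Sym2 V → Fin t) : Prop :=
  (∀ i ≤ p, β s(u, x i) = m i) ∧ (∀ e : Sym2 V, (∀ i ≤ p, e ≠ s(u, x i)) → β e = α e)

/-- A cycle fan is saturated if for every `i` the component of `K_α(α(u xᵢ), m_α(u))`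
containing `u` also contains `x_{i-1}` (cyclically). -/
def SaturatedCycleFan {V : Type*} (G : SimpleGraph V) {t : ℕ} (α : Sym2 V → Fin t)
    (u : V) (p : ℕ) (x : ℕ → V) (mu : Fin t) : Prop :=
  ∀ i ≤ p, (bicolored G α (α s(u, x i)) mu).connectedComponentMk u =
    (bicolored G α (α s(u, x i)) mu).connectedComponentMk (x (if i = 0 then p else i - 1))

private lemma walk_closed {V : Type*} {H : SimpleGraph V} {S : Set V}
    (hS : ∀ z ∈ S, ∀ y, H.Adj z y → y ∈ S) {c d : V} (q : H.Walk c d) (hc : c ∈ S) : d ∈ S := by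
  induction q with
  | nil => exact hc
  | cons h' _ ih => exact ih (hS _ hc _ h')

private lemma single_swap {V : Type*} (G : SimpleGraph V) {t : ℕ} (α β : Sym2 V → Fin t)
    (hα : IsProperEdgeColoring G α) {u w : V} (huw : G.Adj u w)
    {b : Fin t} (hbu : MissingAt G α b u) (hbw : MissingAt G α b w)
    (hβ1 : β s(u, w) = b) (hβ2 : ∀ e, e ≠ s(u, w) → β e = α e) :
    IsKempeSwap G α β := by
  have hew : s(u, w) ∈ G.edgeSet := huw
  set a := α s(u, w) with ha
  have hune : u ≠ w := huw.ne
  have Hadj : ∀ v y : V, (bicolored G α a b).Adj v y ↔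
      (s(v, y) ∈ G.edgeSet ∧ (α s(v, y) = a ∨ α s(v, y) = b)) ∧ v ≠ y := by
    intro v y
    rw [bicolored, SimpleGraph.fromEdgeSet_adj]
    exact Iff.rfl
  have adj_u : ∀ y, (bicolored G α a b).Adj u y → y = w := by
    intro y hy
    rw [Hadj] at hy
    obtain ⟨⟨he, hc⟩, hne⟩ := hy
    rcases hc with hc | hc
    · by_contra hyw
      have hne2 : s(u, y) ≠ s(u, w) := by
        intro h
        rcases Sym2.eq_iff.mp h with ⟨_, h2⟩ | ⟨h1, _⟩
        · exact hyw h2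
        · exact hune h1
      exact hα _ he _ hew hne2 ⟨u, by simp, by simp⟩ (hc.trans ha)
    · exact absurd hc (hbu _ he (by simp))
  have adj_w : ∀ y, (bicolored G α a b).Adj w y → y = u := by
    intro y hy
    rw [Hadj] at hy
    obtain ⟨⟨he, hc⟩, hne⟩ := hy
    rcases hc with hc | hc
    · by_contra hyu
      have hne2 : s(w, y) ≠ s(u, w) := by
        intro h
        rcases Sym2.eq_iff.mp h with ⟨h1, _⟩ | ⟨_, h2⟩
        · exact hune h1.symm
        · exact hyu h2
      exact hα _ he _ hew hne2 ⟨w, by simp, by simp⟩ (hc.trans ha)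
    · exact absurd hc (hbw _ he (by simp))
  have hclosed : ∀ z ∈ ({u, w} : Set V), ∀ y, (bicolored G α a b).Adj z y →
      y ∈ ({u, w} : Set V) := by
    intro z hz y hy
    simp only [Set.mem_insert_iff, Set.mem_singleton_iff] at hz ⊢
    rcases hz with rfl | rfl
    · exact Or.inr (adj_u y hy)
    · exact Or.inl (adj_w y hy)
  have reach_mem : ∀ y, (bicolored G α a b).Reachable u y → y = u ∨ y = w := by
    intro y hy
    obtain ⟨q⟩ := hy
    have := walk_closed hclosed q (by simp)
    simpa using this
  have hadj_uw : (bicolored G α a b).Adj u w := by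
    rw [Hadj]; exact ⟨⟨hew, Or.inl ha.symm⟩, hune⟩
  refine ⟨a, b, (bicolored G α a b).connectedComponentMk u, ?_, ?_⟩
  · intro e he hc hv
    revert he hc hv
    induction e using Sym2.ind with
    | _ y z =>
      intro he hc hv
      have hyz : y ≠ z := (G.mem_edgeSet.mp he).ne
      have hy : y = u ∨ y = w :=
        reach_mem y ((SimpleGraph.ConnectedComponent.eq.mp (hv y (by simp))).symm)
      have hz : z = u ∨ z = w :=
        reach_mem z ((SimpleGraph.ConnectedComponent.eq.mp (hv z (by simp))).symm)
      have heq : s(y, z) = s(u, w) := by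
        rcases hy with rfl | rfl
        · rcases hz with rfl | rfl
          · exact absurd rfl hyz
          · rfl
        · rcases hz with rfl | rfl
          · exact Sym2.eq_swap
          · exact absurd rfl hyz
      rw [heq]
      exact Or.inl ⟨ha.symm, hβ1⟩
  · intro e hcase
    refine hβ2 e ?_
    rintro rfl
    rcases hcase with h | h | ⟨v, hv, hne⟩
    · exact h hew
    · exact h.1 ha.symm
    · rcases Sym2.mem_iff.mp hv with rfl | rfl
      · exact hne rfl
      · exact hne (SimpleGraph.ConnectedComponent.eq.mpr hadj_uw.symm.reachable)

/-- Lemma 2.1: if the fan `X_u(α,v)` is a path, then `α` and `X_u^{-1}(α,v)` are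
Kempe-equivalent. -/
theorem stmt5 {V : Type*} (G : SimpleGraph V) {t : ℕ} (α : Sym2 V → Fin t)
    (hα : IsProperEdgeColoring G α) (u : V) (p : ℕ) (x : ℕ → V) (m : ℕ → Fin t)
    (hfan : IsFan G α u p x m) (hpath : MissingAt G α (m p) u)
    (β : Sym2 V → Fin t) (hβ : IsFanRecolor α u p x m β) :
    KempeEquiv G α β := by
  induction p generalizing α β with
  | zero =>
    refine Relation.ReflTransGen.single ?_
    refine single_swap G α β hα (hfan.adj 0 le_rfl) hpath (hfan.missing 0 le_rfl)
      (hβ.1 0 le_rfl) ?_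
    intro e he
    exact hβ.2 e (fun i hi => by interval_cases i; exact he)
  | succ n ih =>
    classical
    have hadj : G.Adj u (x (n + 1)) := hfan.adj (n + 1) le_rfl
    have hew : s(u, x (n + 1)) ∈ G.edgeSet := hadj
    have hmiss : MissingAt G α (m (n + 1)) (x (n + 1)) := hfan.missing (n + 1) le_rfl
    have hmm : m n ≠ m (n + 1) := by
      intro h
      exact hmiss _ hew (by simp) ((hfan.succ n (Nat.lt_succ_self n)).trans h)
    set α' : Sym2 V → Fin t := fun e => if e = s(u, x (n + 1)) then m (n + 1) else α e with hα'def
    have hα'eq : ∀ e, e ≠ s(u, x (n + 1)) → α' e = α e := by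
      intro e he; simp [hα'def, he]
    have hα'edge : α' s(u, x (n + 1)) = m (n + 1) := by simp [hα'def]
    have step1 : IsKempeSwap G α α' :=
      single_swap G α α' hα hadj hpath hmiss hα'edge hα'eq
    -- properness of α'
    have hα' : IsProperEdgeColoring G α' := by
      intro e₁ h1 e₂ h2 hne ⟨v, hv1, hv2⟩
      by_cases he1 : e₁ = s(u, x (n + 1)) <;> by_cases he2 : e₂ = s(u, x (n + 1))
      · exact absurd (he1.trans he2.symm) hne
      · rw [he1, hα'edge, hα'eq e₂ he2]
        subst he1
        rcases Sym2.mem_iff.mp hv1 with rfl | rfl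
        · exact fun h => hpath e₂ h2 hv2 h.symm
        · exact fun h => hmiss e₂ h2 hv2 h.symm
      · rw [he2, hα'edge, hα'eq e₁ he1]
        subst he2
        rcases Sym2.mem_iff.mp hv2 with rfl | rfl
        · exact hpath e₁ h1 hv1
        · exact hmiss e₁ h1 hv1
      · rw [hα'eq e₁ he1, hα'eq e₂ he2]
        exact hα e₁ h1 e₂ h2 hne ⟨v, hv1, hv2⟩
    -- fan edges with index ≤ n are distinct from the last edge
    have hne_edge : ∀ i ≤ n, s(u, x i) ≠ s(u, x (n + 1)) := by
      intro i hi h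
      rcases Sym2.eq_iff.mp h with ⟨_, h2⟩ | ⟨h1, _⟩
      · have := hfan.inj i (hi.trans (Nat.le_succ n)) (n + 1) le_rfl h2
        omega
      · exact (hfan.adj (n + 1) le_rfl).ne h1
    have hfan' : IsFan G α' u n x m := by
      constructor
      · exact fun i hi => hfan.adj i (hi.trans (Nat.le_succ n))
      · exact fun i hi j hj => hfan.inj i (hi.trans (Nat.le_succ n)) j (hj.trans (Nat.le_succ n))
      · intro i hi e he hxe
        have hxi : x i ≠ u := (hfan.adj i (hi.trans (Nat.le_succ n))).ne'
        have hxin : x i ≠ x (n + 1) := by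
          intro h
          have := hfan.inj i (hi.trans (Nat.le_succ n)) (n + 1) le_rfl h
          omega
        have hene : e ≠ s(u, x (n + 1)) := by
          rintro rfl
          rcases Sym2.mem_iff.mp hxe with h | h
          · exact hxi h
          · exact hxin h
        rw [hα'eq e hene]
        exact hfan.missing i (hi.trans (Nat.le_succ n)) e he hxe
      · intro i hi
        rw [hα'eq _ (hne_edge (i + 1) hi)]
        exact hfan.succ i (by omega)
    have hpath' : MissingAt G α' (m n) u := by
      intro e he hue
      by_cases h : e = s(u, x (n + 1))
      · rw [h, hα'edge]
        exact fun hc => hmm hc.symm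
      · rw [hα'eq e h]
        intro hc
        exact hα e he _ hew h ⟨u, hue, by simp⟩ (hc.trans (hfan.succ n (Nat.lt_succ_self n)).symm)
    have hβ' : IsFanRecolor α' u n x m β := by
      refine ⟨fun i hi => hβ.1 i (hi.trans (Nat.le_succ n)), ?_⟩
      intro e he
      by_cases h : e = s(u, x (n + 1))
      · rw [h, hβ.1 (n + 1) le_rfl, hα'edge]
      · rw [hα'eq e h]
        refine hβ.2 e ?_
        intro i hi
        rcases Nat.lt_succ_iff_lt_or_eq.mp (Nat.lt_succ_of_le hi) with h' | h'
        · exact he i (by omega)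
        · subst h'; exact h
    exact Relation.ReflTransGen.head step1 (ih α' hα' hfan' hpath' β hβ')
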